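/- (Continuity of the left-end function) Let g : ℝ → ℝ satisfy 0 ≤ g x ≤ 1 for all x ∈ [0,1], and suppose that for all x₀, x₁, x₂ ≥ 0 with x₀ + x₁ + x₂ ≤ 1 one has g (x₀ + x₁ + x₂) + g x₂ ≥ g (x₀ + x₂) + g (x₁ + x₂) (g is Wright-convex/ultramodular on [0,1]). Then g is continuous at every point of the open interval (0,1). -/
import Mathlib


/-- Continuity of the left-end function: a `[0,1]`-bounded ultramodular
(Wright-convex) function on `[0,1]` is continuous on the open interval `(0,1)`. -/
theorem ultramodular_continuousOn (g : ℝ → ℝ)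
    (hb : ∀ x ∈ Set.Icc (0:ℝ) 1, 0 ≤ g x ∧ g x ≤ 1)
    (hum : ∀ x₀ x₁ x₂ : ℝ, 0 ≤ x₀ → 0 ≤ x₁ → 0 ≤ x₂ → x₀ + x₁ + x₂ ≤ 1 →
      g (x₀ + x₂) + g (x₁ + x₂) ≤ g (x₀ + x₁ + x₂) + g x₂) :
    ∀ x ∈ Set.Ioo (0:ℝ) 1, ContinuousAt g x := by
  -- monotone increments
  have mono : ∀ u v h : ℝ, 0 ≤ u → u ≤ v → 0 ≤ h → v + h ≤ 1 →
      g (u + h) - g u ≤ g (v + h) - g v := by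
    intro u v h hu huv hh hv1
    have key := hum h (v - u) u hh (by linarith) hu (by linarith)
    have e1 : h + (v - u) + u = v + h := by ring
    have e2 : h + u = u + h := by ring
    have e3 : v - u + u = v := by ring
    rw [e1, e2, e3] at key
    linarith
  -- stacking upward
  have A : ∀ n : ℕ, ∀ a h : ℝ, 0 ≤ a → 0 ≤ h → a + n * h ≤ 1 →
      (n : ℝ) * (g (a + h) - g a) ≤ g (a + n * h) - g a := by
    intro n
    induction n with
    | zero => intro a h _ _ _; simp
    | succ n ih =>
      intro a h ha hh h1
      push_cast at h1 ⊢
      have hnh : a + n * h ≤ 1 := by nlinarith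
      have h2 := mono a (a + n * h) h ha (by nlinarith) hh (by linarith)
      have h3 := ih a h ha hh (by exact_mod_cast hnh)
      push_cast at h3
      have e : a + (n + 1) * h = a + n * h + h := by ring
      rw [e]
      nlinarith
  -- stacking downward
  have B : ∀ n : ℕ, ∀ b h : ℝ, 0 ≤ h → 0 ≤ b - n * h → b + h ≤ 1 →
      g (b + h) - g (b - n * h) ≤ ((n : ℝ) + 1) * (g (b + h) - g b) := by
    intro n
    induction n with
    | zero => intro b h _ _ _; simp
    | succ n ih =>
      intro b h hh hb0 hb1
      push_cast at hb0 ⊢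
      have hb0' : 0 ≤ b - n * h := by nlinarith
      have h2 := mono (b - (n + 1) * h) b h (by linarith) (by nlinarith) hh hb1
      have h3 := ih b h hh (by exact_mod_cast hb0') hb1
      push_cast at h3
      have e : b - (n + 1) * h + h = b - n * h := by ring
      rw [e] at h2
      nlinarith
  intro x hx
  obtain ⟨hx0, hx1⟩ := hx
  rw [Metric.continuousAt_iff]
  intro ε hε
  obtain ⟨m, hm⟩ := exists_nat_one_div_lt hε
  set n : ℕ := m + 1 with hn
  have hnpos : (0:ℝ) < n := by
    have : 0 < n := by omega
    exact_mod_cast this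
  have hge1 : (1:ℝ) ≤ n := by
    have : 1 ≤ n := by omega
    exact_mod_cast this
  have hc : ((n - 1 : ℕ) : ℝ) = (n : ℝ) - 1 := by
    have h1 : n - 1 + 1 = n := by omega
    have h2 : ((n - 1 : ℕ) : ℝ) + 1 = (n : ℝ) := by exact_mod_cast h1
    linarith
  have hn1 : 1 / (n : ℝ) < ε := by exact_mod_cast hm
  refine ⟨min x (1 - x) / n, div_pos (lt_min hx0 (by linarith)) hnpos, ?_⟩
  intro y hy
  rw [Real.dist_eq] at hy ⊢
  have hyx : |y - x| < x / n :=
    lt_of_lt_of_le hy (by gcongr; exact min_le_left _ _)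
  have hyx' : |y - x| < (1 - x) / n :=
    lt_of_lt_of_le hy (by gcongr; exact min_le_right _ _)
  rw [abs_lt] at hyx hyx'
  -- general bound: for a, h with the room conditions, |g(a+h) - g a| ≤ 1/n
  have main : ∀ a h : ℝ, 0 ≤ h → 0 ≤ a - ((n : ℝ) - 1) * h → a + h ≤ 1 →
      a + n * h ≤ 1 → 0 ≤ a → |g (a + h) - g a| ≤ 1 / n := by
    intro a h hh hdown hup1 hup hA0
    have hAn := A n a h hA0 hh hup
    have hBn := B (n - 1) a h hh (by rw [hc]; exact hdown) hup1
    have hcast : ((n - 1 : ℕ) : ℝ) + 1 = (n : ℝ) := by rw [hc]; ring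
    rw [hcast, hc] at hBn
    have hnh : 0 ≤ ((n : ℝ) - 1) * h := mul_nonneg (by linarith) hh
    have g1 := hb (a + n * h) ⟨by positivity, hup⟩
    have g2 := hb a ⟨hA0, by linarith⟩
    have g3 := hb (a + h) ⟨by linarith, hup1⟩
    have g4 := hb (a - ((n : ℝ) - 1) * h) ⟨hdown, by linarith⟩
    rw [abs_le]
    constructor
    · have key : (-1:ℝ) ≤ (g (a + h) - g a) * n := by nlinarith
      have := (div_le_iff₀ hnpos).mpr key
      rw [neg_div] at this
      linarith
    · exact (le_div_iff₀ hnpos).mpr (by nlinarith)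
  rcases le_or_gt x y with hxy | hxy
  · -- y ≥ x, h = y - x, a = x
    have hh : 0 ≤ y - x := by linarith
    have q : 0 ≤ ((n : ℝ) - 1) * (y - x) := mul_nonneg (by linarith) hh
    have p1 : (y - x) * n < 1 - x := (lt_div_iff₀ hnpos).mp hyx'.2
    have p2 : (y - x) * n < x := (lt_div_iff₀ hnpos).mp hyx.2
    have := main x (y - x) hh (by linarith) (by linarith) (by linarith)
      (le_of_lt hx0)
    have e : x + (y - x) = y := by ring
    rw [e] at this
    linarith
  · -- y < x, h = x - y, a = y
    have hh : 0 ≤ x - y := by linarith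
    have q : 0 ≤ ((n : ℝ) - 1) * (x - y) := mul_nonneg (by linarith) hh
    have p1 : (x - y) * n < 1 - x := (lt_div_iff₀ hnpos).mp (by linarith [hyx'.1])
    have p2 : (x - y) * n < x := (lt_div_iff₀ hnpos).mp (by linarith [hyx.1])
    have hy0 : 0 ≤ y := by linarith
    have := main y (x - y) hh (by linarith) (by linarith) (by linarith) hy0
    have e : y + (x - y) = x := by ring
    rw [e] at this
    rw [abs_sub_comm]
    linarith
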